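/- arXiv:1106.4366 — 3 statements merged into one kernel-verified Lean document; each statement's English description precedes it below -/
import Mathlib

section
/- Let α and β be probability measures on the same measurable space with β ≪ α, let φ = dβ/dα, and suppose the relative entropy H = ∫ φ log φ dα is finite. Then for every measurable set A with β(A) > 0, α(A) ≥ β(A) · exp( −(H + 2e^{−1}) / β(A) ). -/
open MeasureTheory

noncomputable section

/-- Elementary inequality: `x * log x ≥ -e⁻¹` for `x ≥ 0`. -/
lemma neg_exp_neg_one_le_mul_log {x : ℝ} (hx : 0 ≤ x) :
    -Real.exp (-1) ≤ x * Real.log x := by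
  rcases eq_or_lt_of_le hx with h | h
  · simp [← h, (Real.exp_pos (-1)).le]
  · have h1 : (-1 - Real.log x) + 1 ≤ Real.exp (-1 - Real.log x) :=
      Real.add_one_le_exp _
    have h2 : Real.exp (-1 - Real.log x) = Real.exp (-1) * x⁻¹ := by
      have hx' : Real.exp (-Real.log x) = x⁻¹ := by
        rw [Real.exp_neg, Real.exp_log h]
      rw [sub_eq_add_neg, Real.exp_add, hx']
    rw [h2] at h1
    have h3 : -Real.log x ≤ Real.exp (-1) * x⁻¹ := by linarith
    have h4 : x * (-Real.log x) ≤ x * (Real.exp (-1) * x⁻¹) :=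
      mul_le_mul_of_nonneg_left h3 hx
    rw [mul_comm (Real.exp (-1)) x⁻¹, ← mul_assoc, mul_inv_cancel₀ h.ne', one_mul] at h4
    linarith

/-- **The entropy lower bound** (Section 3): if `β ≪ α` are probability measures
with `φ = dβ/dα` and finite relative entropy `H = ∫ φ log φ dα`, then for every
measurable `A` with `β(A) > 0`,
`α(A) ≥ β(A) · exp(−(H + 2e⁻¹)/β(A))`. -/
theorem entropy_lower_bound {Ω : Type*} [MeasurableSpace Ω]
    (α β : Measure Ω) [IsProbabilityMeasure α] [IsProbabilityMeasure β]
    (hac : β ≪ α)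
    (hH : Integrable (fun ω => (β.rnDeriv α ω).toReal *
      Real.log (β.rnDeriv α ω).toReal) α)
    (A : Set Ω) (hA : MeasurableSet A) (hβA : 0 < (β A).toReal) :
    (β A).toReal *
        Real.exp (-(((∫ ω, (β.rnDeriv α ω).toReal *
          Real.log (β.rnDeriv α ω).toReal ∂α) + 2 * Real.exp (-1)) / (β A).toReal))
      ≤ (α A).toReal := by
  set φ : Ω → ℝ := fun ω => (β.rnDeriv α ω).toReal with hφ
  set H : ℝ := ∫ ω, φ ω * Real.log (φ ω) ∂α with hHdef
  set b : ℝ := (β A).toReal with hb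
  set a : ℝ := (α A).toReal with ha
  -- α A is positive
  have hαA0 : α A ≠ 0 := by
    intro h
    have : β A = 0 := hac h
    rw [hb, this] at hβA
    simp at hβA
  have haA_lt : α A < ⊤ := measure_lt_top α A
  have ha_pos : 0 < a := ENNReal.toReal_pos hαA0 haA_lt.ne
  -- the restricted measure
  set μ : Measure Ω := α.restrict A with hμ
  have hμuniv : μ Set.univ = α A := by rw [hμ, Measure.restrict_apply_univ]
  haveI : IsFiniteMeasure μ := by
    constructor; rw [hμuniv]; exact haA_lt
  haveI : NeZero μ := ⟨by
    intro h
    apply hαA0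
    rw [← hμuniv, h]; rfl⟩
  -- integrals over A
  have hint_φ : Integrable φ α := Measure.integrable_toReal_rnDeriv
  have hintA : ∫ ω in A, φ ω ∂α = b := Measure.setIntegral_toReal_rnDeriv hac A
  -- Jensen's inequality
  have hjensen :
      (⨍ ω, φ ω ∂μ) * Real.log (⨍ ω, φ ω ∂μ) ≤ ⨍ ω, φ ω * Real.log (φ ω) ∂μ := by
    exact Real.convexOn_mul_log.map_average_le Real.continuous_mul_log.continuousOn
      isClosed_Ici (Filter.Eventually.of_forall fun ω => ENNReal.toReal_nonneg)
      (hint_φ.restrict) (hH.restrict)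
  have havg : ⨍ ω, φ ω ∂μ = b / a := by
    rw [average_eq, measureReal_def, hμuniv, smul_eq_mul, hμ, hintA, div_eq_inv_mul, ha]
  have havg2 : ⨍ ω, φ ω * Real.log (φ ω) ∂μ = a⁻¹ * ∫ ω in A, φ ω * Real.log (φ ω) ∂α := by
    rw [average_eq, measureReal_def, hμuniv, smul_eq_mul, ha, hμ]
  rw [havg, havg2] at hjensen
  -- bound the integral over A by H + 2 e⁻¹
  have hsplit : (∫ ω in A, φ ω * Real.log (φ ω) ∂α)
      + ∫ ω in Aᶜ, φ ω * Real.log (φ ω) ∂α = H := by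
    rw [hHdef]; exact integral_add_compl hA hH
  have hcompl : -Real.exp (-1) * (α Aᶜ).toReal ≤ ∫ ω in Aᶜ, φ ω * Real.log (φ ω) ∂α := by
    have := setIntegral_mono_on (integrableOn_const (measure_lt_top α Aᶜ).ne)
      (hH.restrict (s := Aᶜ)) hA.compl
      (fun ω _ => neg_exp_neg_one_le_mul_log (x := φ ω) ENNReal.toReal_nonneg)
    simpa [mul_comm, measureReal_def] using this
  have hαcompl : (α Aᶜ).toReal ≤ 1 := by
    rw [← ENNReal.toReal_one]
    exact ENNReal.toReal_mono (by simp) prob_le_one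
  have hIA : (∫ ω in A, φ ω * Real.log (φ ω) ∂α) ≤ H + 2 * Real.exp (-1) := by
    have h1 : -Real.exp (-1) * (α Aᶜ).toReal ≥ -Real.exp (-1) := by
      have := Real.exp_pos (-1)
      nlinarith
    linarith [hsplit, hcompl, h1, (Real.exp_pos (-1)).le]
  -- combine
  have hb_pos : 0 < b := hβA
  have hkey : b * Real.log (b / a) ≤ H + 2 * Real.exp (-1) := by
    have h1 : a * ((b / a) * Real.log (b / a)) ≤ a * (a⁻¹ * ∫ ω in A, φ ω * Real.log (φ ω) ∂α) :=
      mul_le_mul_of_nonneg_left hjensen ha_pos.le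
    rw [← mul_assoc, ← mul_assoc, mul_div_cancel₀ _ ha_pos.ne', mul_inv_cancel₀ ha_pos.ne',
      one_mul] at h1
    linarith
  have hlog : Real.log (b / a) ≤ (H + 2 * Real.exp (-1)) / b := by
    rw [le_div_iff₀ hb_pos, mul_comm]
    exact hkey
  have hba : b / a ≤ Real.exp ((H + 2 * Real.exp (-1)) / b) := by
    calc b / a = Real.exp (Real.log (b / a)) :=
          (Real.exp_log (div_pos hb_pos ha_pos)).symm
      _ ≤ Real.exp ((H + 2 * Real.exp (-1)) / b) := Real.exp_le_exp.2 hlog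
  have hfin : b ≤ a * Real.exp ((H + 2 * Real.exp (-1)) / b) := by
    rw [div_le_iff₀ ha_pos] at hba
    linarith [hba]
  calc b * Real.exp (-((H + 2 * Real.exp (-1)) / b))
      ≤ (a * Real.exp ((H + 2 * Real.exp (-1)) / b)) * Real.exp (-((H + 2 * Real.exp (-1)) / b)) :=
        mul_le_mul_of_nonneg_right hfin (Real.exp_pos _).le
    _ = a := by rw [mul_assoc, ← Real.exp_add, add_neg_cancel, Real.exp_zero, mul_one]
end
end

section
/- Let μ be a probability measure on ℝ such that ∫ e^{θx²} dμ(x) < ∞ for every θ > 0. Then: (i) the moment generating function M(θ) = ∫ e^{θx} dμ(x) is finite for all θ ∈ ℝ and satisfies limsup_{|θ|→∞} (1/θ²) log M(θ) = 0; and (ii) the Cramér rate function h(x) = sup_θ [θx − log M(θ)] satisfies liminf_{|x|→∞} h(x)/x² = +∞. -/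
open MeasureTheory Filter
open scoped ENNReal

noncomputable section

/-- The unit interval `[0,1]` as a subset of `ℝ`. -/
def unitI : Set ℝ := Set.Icc 0 1

/-- Moment generating function `M(θ) = ∫ e^{θ x} dμ(x)`. -/
def mgf' (μ : Measure ℝ) (θ : ℝ) : ℝ := ∫ x, Real.exp (θ * x) ∂μ

/-- The Cramér rate function `h(z) = sup_θ (θ z - log M(θ))`, as an extended
nonnegative real (it is always nonnegative, taking `θ = 0`). -/
def cramerRate (μ : Measure ℝ) (z : ℝ) : ℝ≥0∞ :=
  ⨆ θ : ℝ, ENNReal.ofReal (θ * z - Real.log (mgf' μ θ))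

/-- The rate function `I(k) = (1/2) ∫∫ h(k(x,y)) dx dy`. -/
def rateI (μ : Measure ℝ) (k : ℝ → ℝ → ℝ) : ℝ≥0∞ :=
  (1/2) * ∫⁻ x in unitI, ∫⁻ y in unitI, cramerRate μ (k x y)

/- Auxiliary lemmas -/

lemma amgm_aux (ε θ x : ℝ) (hε : 0 < ε) : θ * x ≤ ε * x ^ 2 + θ ^ 2 / (4 * ε) := by
  have h4 : (0:ℝ) < 4 * ε := by linarith
  have h : θ * x - ε * x ^ 2 ≤ θ ^ 2 / (4 * ε) := by
    rw [le_div_iff₀ h4]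
    nlinarith [sq_nonneg (2 * ε * x - θ)]
  linarith

lemma int_gauss (μ : Measure ℝ) [IsProbabilityMeasure μ]
    (hμ : ∀ θ : ℝ, 0 < θ → (∫⁻ x, ENNReal.ofReal (Real.exp (θ * x ^ 2)) ∂μ) < ⊤)
    (ε : ℝ) (hε : 0 < ε) : Integrable (fun x => Real.exp (ε * x ^ 2)) μ := by
  rw [← lintegral_ofReal_ne_top_iff_integrable]
  · exact (hμ ε hε).ne
  · exact (Real.measurable_exp.comp (measurable_const.mul ((measurable_id.pow_const 2)))).aestronglyMeasurable
  · exact Filter.Eventually.of_forall fun x => (Real.exp_pos _).le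

lemma int_exp (μ : Measure ℝ) [IsProbabilityMeasure μ]
    (hμ : ∀ θ : ℝ, 0 < θ → (∫⁻ x, ENNReal.ofReal (Real.exp (θ * x ^ 2)) ∂μ) < ⊤)
    (θ : ℝ) : Integrable (fun x => Real.exp (θ * x)) μ := by
  have h1 := (int_gauss μ hμ 1 one_pos).const_mul (Real.exp (θ ^ 2 / (4 * 1)))
  refine Integrable.mono' h1 ?_ ?_
  · exact (Real.measurable_exp.comp (measurable_const.mul measurable_id)).aestronglyMeasurable
  · filter_upwards with x
    rw [Real.norm_eq_abs, abs_of_nonneg (Real.exp_pos _).le, ← Real.exp_add]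
    exact Real.exp_le_exp.2 (by linarith [amgm_aux 1 θ x one_pos])

lemma mgf'_pos (μ : Measure ℝ) [IsProbabilityMeasure μ]
    (hμ : ∀ θ : ℝ, 0 < θ → (∫⁻ x, ENNReal.ofReal (Real.exp (θ * x ^ 2)) ∂μ) < ⊤)
    (θ : ℝ) : 0 < mgf' μ θ := by
  have : mgf' μ θ = ProbabilityTheory.mgf id μ θ := rfl
  rw [this]
  exact ProbabilityTheory.mgf_pos (int_exp μ hμ θ)

lemma one_le_Cint (μ : Measure ℝ) [IsProbabilityMeasure μ]
    (hμ : ∀ θ : ℝ, 0 < θ → (∫⁻ x, ENNReal.ofReal (Real.exp (θ * x ^ 2)) ∂μ) < ⊤)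
    (ε : ℝ) (hε : 0 < ε) : 1 ≤ ∫ x, Real.exp (ε * x ^ 2) ∂μ := by
  have h := integral_mono (integrable_const 1) (int_gauss μ hμ ε hε)
    (fun x => Real.one_le_exp (by positivity))
  simpa using h

lemma log_mgf_le (μ : Measure ℝ) [IsProbabilityMeasure μ]
    (hμ : ∀ θ : ℝ, 0 < θ → (∫⁻ x, ENNReal.ofReal (Real.exp (θ * x ^ 2)) ∂μ) < ⊤)
    (ε θ : ℝ) (hε : 0 < ε) :
    Real.log (mgf' μ θ) ≤ θ ^ 2 / (4 * ε) + Real.log (∫ x, Real.exp (ε * x ^ 2) ∂μ) := by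
  set C := ∫ x, Real.exp (ε * x ^ 2) ∂μ with hC
  have hC1 : 1 ≤ C := one_le_Cint μ hμ ε hε
  have hmle : mgf' μ θ ≤ Real.exp (θ ^ 2 / (4 * ε)) * C := by
    have hmono : mgf' μ θ ≤ ∫ x, Real.exp (θ ^ 2 / (4 * ε)) * Real.exp (ε * x ^ 2) ∂μ := by
      refine integral_mono (int_exp μ hμ θ) ((int_gauss μ hμ ε hε).const_mul _) fun x => ?_
      rw [← Real.exp_add]
      exact Real.exp_le_exp.2 (by linarith [amgm_aux ε θ x hε])
    rwa [integral_const_mul] at hmono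
  calc Real.log (mgf' μ θ) ≤ Real.log (Real.exp (θ ^ 2 / (4 * ε)) * C) :=
        Real.log_le_log (mgf'_pos μ hμ θ) hmle
    _ = θ ^ 2 / (4 * ε) + Real.log C := by
        rw [Real.log_mul (Real.exp_ne_zero _) (by linarith), Real.log_exp]

lemma int_id (μ : Measure ℝ) [IsProbabilityMeasure μ]
    (hμ : ∀ θ : ℝ, 0 < θ → (∫⁻ x, ENNReal.ofReal (Real.exp (θ * x ^ 2)) ∂μ) < ⊤) :
    Integrable (fun x : ℝ => x) μ := by
  have hb : Integrable (fun x : ℝ => Real.exp (1 * x) + Real.exp ((-1) * x)) μ :=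
    (int_exp μ hμ 1).add (int_exp μ hμ (-1))
  refine Integrable.mono' hb measurable_id.aestronglyMeasurable ?_
  filter_upwards with x
  simp only [Real.norm_eq_abs, one_mul, neg_one_mul]
  rcases abs_cases x with ⟨h, _⟩ | ⟨h, _⟩ <;> rw [h] <;>
    nlinarith [Real.add_one_le_exp x, Real.add_one_le_exp (-x), Real.exp_pos x,
      Real.exp_pos (-x)]

lemma jensen_lower (μ : Measure ℝ) [IsProbabilityMeasure μ]
    (hμ : ∀ θ : ℝ, 0 < θ → (∫⁻ x, ENNReal.ofReal (Real.exp (θ * x ^ 2)) ∂μ) < ⊤)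
    (θ : ℝ) : θ * (∫ x, x ∂μ) ≤ Real.log (mgf' μ θ) := by
  have hJ : Real.exp (∫ x, θ * x ∂μ) ≤ ∫ x, Real.exp (θ * x) ∂μ := by
    refine convexOn_exp.map_integral_le Real.continuous_exp.continuousOn isClosed_univ
      (Filter.Eventually.of_forall fun _ => Set.mem_univ _)
      ((int_id μ hμ).const_mul θ) ?_
    exact int_exp μ hμ θ
  rw [integral_const_mul] at hJ
  exact (Real.le_log_iff_exp_le (mgf'_pos μ hμ θ)).2 hJ

lemma absFilter_neBot : (Filter.comap (fun θ : ℝ => |θ|) Filter.atTop).NeBot := by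
  refine Filter.comap_neBot fun s hs => ?_
  obtain ⟨a, ha⟩ := mem_atTop_sets.1 hs
  exact ⟨|a|, ha _ (by rw [abs_abs]; exact le_abs_self a)⟩

lemma eventually_absFilter {P : ℝ → Prop} (N : ℝ) (h : ∀ θ : ℝ, N ≤ |θ| → P θ) :
    ∀ᶠ θ in Filter.comap (fun θ : ℝ => |θ|) Filter.atTop, P θ :=
  Filter.eventually_comap.2 (Filter.eventually_atTop.2 ⟨N, fun b hb θ hθ => h θ (hθ ▸ hb)⟩)

/-- **Properties of the moment generating function and the Cramér rate function**
under the super-Gaussian moment assumption (Section 1): `M(θ)` is finite for all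
`θ`, `limsup_{|θ|→∞} (1/θ²) log M(θ) = 0`, and `liminf_{|x|→∞} h(x)/x² = +∞`. -/
theorem mgf_and_cramer_growth (μ : Measure ℝ) [IsProbabilityMeasure μ]
    (hμ : ∀ θ : ℝ, 0 < θ → (∫⁻ x, ENNReal.ofReal (Real.exp (θ * x ^ 2)) ∂μ) < ⊤) :
    (∀ θ : ℝ, Integrable (fun x => Real.exp (θ * x)) μ) ∧
    (Filter.limsup (fun θ : ℝ => Real.log (mgf' μ θ) / θ ^ 2)
      (Filter.comap (fun θ : ℝ => |θ|) Filter.atTop) = 0) ∧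
    (Filter.liminf (fun x : ℝ => cramerRate μ x / ENNReal.ofReal (x ^ 2))
      (Filter.comap (fun x : ℝ => |x|) Filter.atTop) = ⊤) := by
  have hL := absFilter_neBot
  set m : ℝ := ∫ x, x ∂μ with hm
  refine ⟨int_exp μ hμ, ?_, ?_⟩
  · -- limsup part, via tendsto 0
    have hT : Tendsto (fun θ : ℝ => Real.log (mgf' μ θ) / θ ^ 2)
        (Filter.comap (fun θ : ℝ => |θ|) Filter.atTop) (nhds 0) := by
      rw [Metric.tendsto_nhds]
      intro δ hδ
      set ε : ℝ := 1 / δ with hε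
      have hεpos : 0 < ε := by positivity
      set C : ℝ := ∫ x, Real.exp (ε * x ^ 2) ∂μ with hCdef
      have hC1 : (1:ℝ) ≤ C := one_le_Cint μ hμ ε hεpos
      have hlogC : 0 ≤ Real.log C := Real.log_nonneg hC1
      set N : ℝ := max 1 (max ((|m| + 1) * (2 / δ)) (Real.sqrt ((Real.log C + 1) * (4 / δ)))) with hN
      refine eventually_absFilter N fun θ hθ => ?_
      have hN1 : (1:ℝ) ≤ N := le_max_left _ _
      have hθ1 : (1:ℝ) ≤ |θ| := le_trans hN1 hθ
      have hθ0 : θ ≠ 0 := by intro h; rw [h] at hθ1; simp at hθ1; linarith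
      have hθ2pos : 0 < θ ^ 2 := by positivity
      have hsq : (Real.log C + 1) * (4 / δ) ≤ θ ^ 2 := by
        have h1 : Real.sqrt ((Real.log C + 1) * (4 / δ)) ≤ |θ| :=
          le_trans (le_trans (le_max_right _ _) (le_max_right _ _)) hθ
        have h2 : Real.sqrt ((Real.log C + 1) * (4 / δ)) ^ 2 ≤ |θ| ^ 2 :=
          pow_le_pow_left₀ (Real.sqrt_nonneg _) h1 2
        rwa [Real.sq_sqrt (by positivity), sq_abs] at h2
      have hm' : (|m| + 1) * (2 / δ) ≤ |θ| :=
        le_trans (le_trans (le_max_left _ _) (le_max_right _ _)) hθ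
      rw [Real.dist_eq, sub_zero, abs_lt]
      constructor
      · -- lower bound via Jensen
        have hJ : θ * m ≤ Real.log (mgf' μ θ) := jensen_lower μ hμ θ
        have h1 : θ * m / θ ^ 2 ≤ Real.log (mgf' μ θ) / θ ^ 2 :=
          (div_le_div_iff_of_pos_right hθ2pos).2 hJ
        have h2 : -δ < θ * m / θ ^ 2 := by
          have hq : θ * m / θ ^ 2 = m / θ := by
            rw [pow_two, mul_div_mul_left m θ hθ0]
          have habs : |m / θ| < δ := by
            rw [abs_div, div_lt_iff₀ (by linarith : (0:ℝ) < |θ|)]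
            have h3 : (|m| + 1) * (2 / δ) * δ ≤ |θ| * δ :=
              mul_le_mul_of_nonneg_right hm' hδ.le
            have h4 : (|m| + 1) * (2 / δ) * δ = (|m| + 1) * 2 := by
              field_simp
            nlinarith [abs_nonneg m]
          rw [hq]
          linarith [neg_lt_of_abs_lt habs]
        linarith
      · -- upper bound
        have hub := log_mgf_le μ hμ ε θ hεpos
        have h4ε : (4 : ℝ) * ε = 4 / δ := by rw [hε]; field_simp
        have hup : Real.log (mgf' μ θ) / θ ^ 2 ≤ δ / 4 + Real.log C / θ ^ 2 := by
          have := (div_le_div_iff_of_pos_right hθ2pos).2 hub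
          rw [add_div] at this
          have hx : θ ^ 2 / (4 * ε) / θ ^ 2 = δ / 4 := by
            rw [h4ε]; field_simp
          rwa [hx] at this
        have hlogterm : Real.log C / θ ^ 2 ≤ δ / 4 := by
          rw [div_le_iff₀ hθ2pos]
          have h6 : δ / 4 * ((Real.log C + 1) * (4 / δ)) = Real.log C + 1 := by
            field_simp
          have h7 := mul_le_mul_of_nonneg_left hsq (by positivity : (0:ℝ) ≤ δ / 4)
          linarith
        linarith
    rw [hT.limsup_eq]
  · -- liminf part, via tendsto ⊤
    have hT : Tendsto (fun x : ℝ => cramerRate μ x / ENNReal.ofReal (x ^ 2))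
        (Filter.comap (fun x : ℝ => |x|) Filter.atTop) (nhds ⊤) := by
      refine ENNReal.tendsto_nhds_top fun n => ?_
      set s : ℝ := 2 * n + 4 with hs
      have hspos : 0 < s := by positivity
      set ε : ℝ := s / 2 with hε
      have hεpos : 0 < ε := by positivity
      set C : ℝ := ∫ x, Real.exp (ε * x ^ 2) ∂μ with hCdef
      have hC1 : (1:ℝ) ≤ C := one_le_Cint μ hμ ε hεpos
      have hlogC : 0 ≤ Real.log C := Real.log_nonneg hC1
      set N : ℝ := max 1 (Real.sqrt (Real.log C)) with hN
      refine eventually_absFilter N fun x hx => ?_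
      have hx1 : (1:ℝ) ≤ |x| := le_trans (le_max_left _ _) hx
      have hx2pos : 0 < x ^ 2 := by
        rw [← sq_abs]; exact pow_pos (by linarith) 2
      have hxsq : Real.log C ≤ x ^ 2 := by
        have h1 : Real.sqrt (Real.log C) ≤ |x| := le_trans (le_max_right _ _) hx
        have h2 := pow_le_pow_left₀ (Real.sqrt_nonneg _) h1 2
        rwa [Real.sq_sqrt hlogC, sq_abs] at h2
      -- key lower bound on cramerRate
      have hkey : ENNReal.ofReal ((n + 1 : ℝ) * x ^ 2) ≤ cramerRate μ x := by
        refine le_trans ?_ (le_iSup (fun θ : ℝ => ENNReal.ofReal (θ * x - Real.log (mgf' μ θ))) (s * x))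
        refine ENNReal.ofReal_le_ofReal ?_
        have hub := log_mgf_le μ hμ ε (s * x) hεpos
        have heq : (s * x) ^ 2 / (4 * ε) = (s / 2) * x ^ 2 := by
          rw [hε]; field_simp; ring
        rw [heq] at hub
        have : s * x * x = s * x ^ 2 := by ring
        rw [this]
        have h5 : (s / 2) * x ^ 2 = (n + 2 : ℝ) * x ^ 2 := by rw [hs]; ring
        nlinarith
      calc (n : ℝ≥0∞) < ENNReal.ofReal ((n : ℝ) + 1) := ENNReal.natCast_lt_ofReal.2 (by linarith)
        _ = ENNReal.ofReal ((n + 1 : ℝ) * x ^ 2 / x ^ 2) := by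
            rw [mul_div_assoc, div_self hx2pos.ne', mul_one]
        _ = ENNReal.ofReal ((n + 1 : ℝ) * x ^ 2) / ENNReal.ofReal (x ^ 2) :=
            ENNReal.ofReal_div_of_pos hx2pos
        _ ≤ cramerRate μ x / ENNReal.ofReal (x ^ 2) :=
            ENNReal.div_le_div_right hkey _
    rw [hT.liminf_eq]

end
end

section
/- Let μ be a probability measure on ℝ such that ∫ e^{θx²} dμ(x) < ∞ for every θ > 0. For ℓ > 0 define the truncation f_ℓ(x) = x for |x| ≤ ℓ, f_ℓ(x) = ℓ for x ≥ ℓ, f_ℓ(x) = −ℓ for x ≤ −ℓ. Let {x_{i,j}}, 1 ≤ i,j ≤ n, be a symmetric random matrix with entries for j ≥ i i.i.d. with law μ. Then: (i) for every θ > 0, limsup_{ℓ→∞} limsup_{n→∞} (1/n²) log 𝔼 exp[ θ Σ_{i,j=1}^n (x_{i,j} − f_ℓ(x_{i,j}))² ] = 0; and (ii) consequently, for every ε > 0, limsup_{ℓ→∞} limsup_{n→∞} (1/n²) log ℙ[ (1/n²) Σ_{i,j=1}^n (x_{i,j} − f_ℓ(x_{i,j}))² ≥ ε ] = −∞. -/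
open MeasureTheory Filter
open scoped ENNReal
open scoped Topology

noncomputable section

/-- Index set for the upper triangle (including diagonal) of an `n × n` matrix. -/
def UpperTri (n : ℕ) := {p : Fin n × Fin n // p.1 ≤ p.2}

instance (n : ℕ) : Fintype (UpperTri n) := by unfold UpperTri; infer_instance

/-- The symmetric matrix built from i.i.d. entries indexed by the upper triangle. -/
def matrixOf {n : ℕ} (ω : UpperTri n → ℝ) : Fin n → Fin n → ℝ := fun i j =>
  if h : i ≤ j then ω ⟨(i, j), h⟩ else ω ⟨(j, i), (le_total i j).resolve_left h⟩

/-- The joint law of the (upper triangular) i.i.d. entries. -/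
def matMeasure (μ : Measure ℝ) [SigmaFinite μ] (n : ℕ) : Measure (UpperTri n → ℝ) :=
  Measure.pi fun _ => μ

/-- Truncation of a real number at level `ℓ`. -/
def truncAt (ℓ x : ℝ) : ℝ := max (-ℓ) (min ℓ x)



lemma trunc_continuous (ℓ : ℝ) : Continuous fun x : ℝ => (x - truncAt ℓ x) ^ 2 := by
  unfold truncAt; fun_prop

lemma trunc_sq_le {ℓ : ℝ} (hℓ : 0 ≤ ℓ) (x : ℝ) : (x - truncAt ℓ x) ^ 2 ≤ x ^ 2 := by
  unfold truncAt
  rcases le_total x ℓ with h | h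
  · rw [min_eq_right h]
    rcases le_total (-ℓ) x with h' | h'
    · rw [max_eq_right h']; simp [sq_nonneg]
    · rw [max_eq_left h']; nlinarith
  · rw [min_eq_left h, max_eq_right (by linarith : -ℓ ≤ ℓ)]; nlinarith

lemma trunc_eq_self {ℓ x : ℝ} (h : |x| ≤ ℓ) : truncAt ℓ x = x := by
  rcases abs_le.1 h with ⟨h1, h2⟩
  unfold truncAt
  rw [min_eq_right h2, max_eq_right h1]

lemma matrixOf_apply_upper {n : ℕ} (ω : UpperTri n → ℝ) (p : UpperTri n) :
    matrixOf ω p.1.1 p.1.2 = ω p := by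
  simp only [matrixOf, dif_pos p.2]
  rfl

lemma matrixOf_symm {n : ℕ} (ω : UpperTri n → ℝ) (i j : Fin n) :
    matrixOf ω i j = matrixOf ω j i := by
  unfold matrixOf
  rcases le_or_gt i j with h | h
  · rcases eq_or_lt_of_le h with rfl | h'
    · rfl
    · rw [dif_pos h, dif_neg (not_le.2 h')]
  · rw [dif_neg (not_le.2 h), dif_pos h.le]

lemma measurable_matrixOf {n : ℕ} (i j : Fin n) :
    Measurable fun ω : UpperTri n → ℝ => matrixOf ω i j := by
  unfold matrixOf
  by_cases h : i ≤ j
  · simp only [dif_pos h]; exact measurable_pi_apply _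
  · simp only [dif_neg h]; exact measurable_pi_apply _

lemma sum_matrixOf_le {n : ℕ} (f : ℝ → ℝ) (hf : ∀ x, 0 ≤ f x) (ω : UpperTri n → ℝ) :
    ∑ i : Fin n, ∑ j : Fin n, f (matrixOf ω i j) ≤ 2 * ∑ p : UpperTri n, f (ω p) := by
  classical
  have hsub : ∑ p : UpperTri n, f (ω p)
      = ∑ q ∈ Finset.univ.filter (fun q : Fin n × Fin n => q.1 ≤ q.2),
          f (matrixOf ω q.1 q.2) := by
    have h1 := Finset.sum_subtype (p := fun q : Fin n × Fin n => q.1 ≤ q.2)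
      (F := Subtype.fintype _)
      (Finset.univ.filter (fun q : Fin n × Fin n => q.1 ≤ q.2))
      (by simp) (fun q : Fin n × Fin n => f (matrixOf ω q.1 q.2))
    rw [h1]
    exact Finset.sum_congr rfl fun p _ => by rw [matrixOf_apply_upper]
  have split := Finset.sum_filter_add_sum_filter_not (Finset.univ : Finset (Fin n × Fin n))
    (fun q => q.1 ≤ q.2) (fun q => f (matrixOf ω q.1 q.2))
  have hswap : ∑ q ∈ Finset.univ.filter (fun q : Fin n × Fin n => ¬ q.1 ≤ q.2),
        f (matrixOf ω q.1 q.2)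
      = ∑ q ∈ Finset.univ.filter (fun q : Fin n × Fin n => ¬ q.2 ≤ q.1),
        f (matrixOf ω q.1 q.2) := by
    refine Finset.sum_nbij' (fun q => q.swap) (fun q => q.swap) ?_ ?_ ?_ ?_ ?_
    · intro a ha; simp only [Finset.mem_filter, Finset.mem_univ, true_and] at ha ⊢
      simpa using ha
    · intro a ha; simp only [Finset.mem_filter, Finset.mem_univ, true_and] at ha ⊢
      simpa using ha
    · intro a _; simp
    · intro a _; simp
    · intro a _; simp only [Prod.fst_swap, Prod.snd_swap]; exact congrArg f (matrixOf_symm ω a.1 a.2)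
  have hsubset : (Finset.univ.filter (fun q : Fin n × Fin n => ¬ q.2 ≤ q.1))
      ⊆ Finset.univ.filter (fun q : Fin n × Fin n => q.1 ≤ q.2) :=
    Finset.monotone_filter_right _ (fun q _ hq => (not_le.1 hq).le)
  have hle2 : ∑ q ∈ Finset.univ.filter (fun q : Fin n × Fin n => ¬ q.2 ≤ q.1),
        f (matrixOf ω q.1 q.2)
      ≤ ∑ q ∈ Finset.univ.filter (fun q : Fin n × Fin n => q.1 ≤ q.2),
        f (matrixOf ω q.1 q.2) :=
    Finset.sum_le_sum_of_subset_of_nonneg hsubset (fun q _ _ => hf _)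
  have htotal : ∑ i : Fin n, ∑ j : Fin n, f (matrixOf ω i j)
      = ∑ q : Fin n × Fin n, f (matrixOf ω q.1 q.2) := (Fintype.sum_prod_type (fun q : Fin n × Fin n => f (matrixOf ω q.1 q.2))).symm
  rw [htotal, ← split, hsub]
  linarith [hswap, hle2]

lemma card_upperTri_le (n : ℕ) : Fintype.card (UpperTri n) ≤ n ^ 2 := by
  have h : Fintype.card (UpperTri n) ≤ Fintype.card (Fin n × Fin n) :=
    Fintype.card_le_of_injective (fun p => p.1) (fun a b h => Subtype.ext h)
  simpa [sq] using h


variable {μ : Measure ℝ}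

lemma integrable_exp_mul_sq [IsProbabilityMeasure μ]
    (hμ : ∀ θ : ℝ, 0 < θ → (∫⁻ x, ENNReal.ofReal (Real.exp (θ * x ^ 2)) ∂μ) < ⊤)
    {c : ℝ} (hc : 0 < c) : Integrable (fun x => Real.exp (c * x ^ 2)) μ := by
  refine ⟨(by fun_prop : Continuous fun x : ℝ => Real.exp (c * x ^ 2)).aestronglyMeasurable, ?_⟩
  rw [hasFiniteIntegral_iff_ofReal (Eventually.of_forall fun x => (Real.exp_pos _).le)]
  exact hμ c hc

lemma integrable_exp_trunc [IsProbabilityMeasure μ]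
    (hμ : ∀ θ : ℝ, 0 < θ → (∫⁻ x, ENNReal.ofReal (Real.exp (θ * x ^ 2)) ∂μ) < ⊤)
    {c ℓ : ℝ} (hc : 0 < c) (hℓ : 0 ≤ ℓ) :
    Integrable (fun x => Real.exp (c * (x - truncAt ℓ x) ^ 2)) μ := by
  refine (integrable_exp_mul_sq hμ hc).mono'
    ((Real.continuous_exp.comp (continuous_const.mul (trunc_continuous ℓ))).aestronglyMeasurable)
    (Eventually.of_forall fun x => ?_)
  rw [Real.norm_eq_abs, abs_of_pos (Real.exp_pos _)]
  exact Real.exp_le_exp.2 (mul_le_mul_of_nonneg_left (trunc_sq_le hℓ x) hc.le)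

lemma one_le_integral_exp_trunc [IsProbabilityMeasure μ]
    (hμ : ∀ θ : ℝ, 0 < θ → (∫⁻ x, ENNReal.ofReal (Real.exp (θ * x ^ 2)) ∂μ) < ⊤)
    {c ℓ : ℝ} (hc : 0 < c) (hℓ : 0 ≤ ℓ) :
    1 ≤ ∫ x, Real.exp (c * (x - truncAt ℓ x) ^ 2) ∂μ := by
  have h := integral_mono (integrable_const (1 : ℝ)) (integrable_exp_trunc hμ hc hℓ)
    (fun x => Real.one_le_exp (mul_nonneg hc.le (sq_nonneg _)))
  simpa using h

lemma tendsto_integral_exp_trunc [IsProbabilityMeasure μ]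
    (hμ : ∀ θ : ℝ, 0 < θ → (∫⁻ x, ENNReal.ofReal (Real.exp (θ * x ^ 2)) ∂μ) < ⊤)
    {c : ℝ} (hc : 0 < c) :
    Tendsto (fun ℓ : ℝ => ∫ x, Real.exp (c * (x - truncAt ℓ x) ^ 2) ∂μ) atTop (𝓝 1) := by
  have h := tendsto_integral_filter_of_dominated_convergence (μ := μ) (l := atTop)
    (F := fun (ℓ : ℝ) (x : ℝ) => Real.exp (c * (x - truncAt ℓ x) ^ 2))
    (f := fun _ => (1 : ℝ)) (bound := fun x => Real.exp (c * x ^ 2))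
    (Eventually.of_forall fun ℓ =>
      (Real.continuous_exp.comp (continuous_const.mul (trunc_continuous ℓ)) :
        Continuous fun x => Real.exp (c * (x - truncAt ℓ x) ^ 2)).aestronglyMeasurable)
    (by
      filter_upwards [eventually_ge_atTop (0 : ℝ)] with ℓ hℓ
      refine Eventually.of_forall fun x => ?_
      rw [Real.norm_eq_abs, abs_of_pos (Real.exp_pos _)]
      exact Real.exp_le_exp.2 (mul_le_mul_of_nonneg_left (trunc_sq_le hℓ x) hc.le))
    (integrable_exp_mul_sq hμ hc)
    (Eventually.of_forall fun x => by
      refine tendsto_const_nhds.congr' ?_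
      filter_upwards [eventually_ge_atTop |x|] with ℓ hℓ
      simp [trunc_eq_self hℓ])
  simpa using h

lemma main_estimate (μ : Measure ℝ) [IsProbabilityMeasure μ]
    (hμ : ∀ θ : ℝ, 0 < θ → (∫⁻ x, ENNReal.ofReal (Real.exp (θ * x ^ 2)) ∂μ) < ⊤)
    {θ ℓ : ℝ} (hθ : 0 < θ) (hℓ : 0 ≤ ℓ) (n : ℕ) :
    Integrable (fun ω : UpperTri n → ℝ => Real.exp (θ * ∑ i : Fin n, ∑ j : Fin n,
        (matrixOf ω i j - truncAt ℓ (matrixOf ω i j)) ^ 2)) (matMeasure μ n) ∧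
    1 ≤ (∫ ω, Real.exp (θ * ∑ i : Fin n, ∑ j : Fin n,
        (matrixOf ω i j - truncAt ℓ (matrixOf ω i j)) ^ 2) ∂(matMeasure μ n)) ∧
    (∫ ω, Real.exp (θ * ∑ i : Fin n, ∑ j : Fin n,
        (matrixOf ω i j - truncAt ℓ (matrixOf ω i j)) ^ 2) ∂(matMeasure μ n))
      ≤ (∫ x, Real.exp ((2 * θ) * (x - truncAt ℓ x) ^ 2) ∂μ) ^ (Fintype.card (UpperTri n)) := by
  haveI : IsProbabilityMeasure (matMeasure μ n) := by
    unfold matMeasure; infer_instance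
  have h2θ : (0 : ℝ) < 2 * θ := by linarith
  have h1 : Integrable (fun x : ℝ => Real.exp ((2 * θ) * (x - truncAt ℓ x) ^ 2)) μ :=
    integrable_exp_trunc hμ h2θ hℓ
  have hSm : Measurable fun ω : UpperTri n → ℝ => Real.exp (θ * ∑ i : Fin n, ∑ j : Fin n,
      (matrixOf ω i j - truncAt ℓ (matrixOf ω i j)) ^ 2) := by
    apply Real.measurable_exp.comp
    apply Measurable.const_mul
    apply Finset.measurable_sum _ (fun i _ => Finset.measurable_sum _ (fun j _ => ?_))
    exact (trunc_continuous ℓ).measurable.comp (measurable_matrixOf i j)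
  have hGint : Integrable (fun ω : UpperTri n → ℝ =>
      ∏ p : UpperTri n, Real.exp ((2 * θ) * (ω p - truncAt ℓ (ω p)) ^ 2)) (matMeasure μ n) :=
    MeasureTheory.Integrable.fintype_prod (𝕜 := ℝ) (ι := UpperTri n) (E := ℝ)
      (f := fun _ x => Real.exp ((2 * θ) * (x - truncAt ℓ x) ^ 2)) (μ := fun _ => μ)
      (fun _ => h1)
  have hle : ∀ ω : UpperTri n → ℝ,
      Real.exp (θ * ∑ i : Fin n, ∑ j : Fin n,
        (matrixOf ω i j - truncAt ℓ (matrixOf ω i j)) ^ 2)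
      ≤ ∏ p : UpperTri n, Real.exp ((2 * θ) * (ω p - truncAt ℓ (ω p)) ^ 2) := by
    intro ω
    rw [← Real.exp_sum]
    apply Real.exp_le_exp.2
    have hsum := sum_matrixOf_le (fun x => (x - truncAt ℓ x) ^ 2) (fun x => sq_nonneg _) ω
    calc θ * ∑ i : Fin n, ∑ j : Fin n, (matrixOf ω i j - truncAt ℓ (matrixOf ω i j)) ^ 2
        ≤ θ * (2 * ∑ p : UpperTri n, (ω p - truncAt ℓ (ω p)) ^ 2) :=
          mul_le_mul_of_nonneg_left hsum hθ.le
      _ = ∑ p : UpperTri n, (2 * θ) * (ω p - truncAt ℓ (ω p)) ^ 2 := by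
          rw [← mul_assoc, Finset.mul_sum]
          exact Finset.sum_congr rfl fun p _ => by ring
  have hint : Integrable (fun ω : UpperTri n → ℝ => Real.exp (θ * ∑ i : Fin n, ∑ j : Fin n,
      (matrixOf ω i j - truncAt ℓ (matrixOf ω i j)) ^ 2)) (matMeasure μ n) := by
    refine hGint.mono' hSm.aestronglyMeasurable (Eventually.of_forall fun ω => ?_)
    rw [Real.norm_eq_abs, abs_of_pos (Real.exp_pos _)]
    exact hle ω
  refine ⟨hint, ?_, ?_⟩
  · have h := integral_mono (integrable_const (1 : ℝ)) hint (fun ω =>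
      Real.one_le_exp (mul_nonneg hθ.le (Finset.sum_nonneg fun i _ =>
        Finset.sum_nonneg fun j _ => sq_nonneg _)))
    simpa using h
  · have hmono := integral_mono hint hGint hle
    have hprod : ∫ ω, (∏ p : UpperTri n, Real.exp ((2 * θ) * (ω p - truncAt ℓ (ω p)) ^ 2))
          ∂(matMeasure μ n)
        = (∫ x, Real.exp ((2 * θ) * (x - truncAt ℓ x) ^ 2) ∂μ) ^ (Fintype.card (UpperTri n)) :=
      MeasureTheory.integral_fintype_prod_eq_pow (𝕜 := ℝ) (ι := UpperTri n)
        (fun x => Real.exp ((2 * θ) * (x - truncAt ℓ x) ^ 2)) (μ := μ)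
    rw [← hprod]
    exact hmono

lemma part_one (μ : Measure ℝ) [IsProbabilityMeasure μ]
    (hμ : ∀ θ : ℝ, 0 < θ → (∫⁻ x, ENNReal.ofReal (Real.exp (θ * x ^ 2)) ∂μ) < ⊤)
    {θ : ℝ} (hθ : 0 < θ) :
    Filter.limsup (fun ℓ : ℝ =>
      Filter.limsup (fun n : ℕ =>
        (1 / (n : ℝ) ^ 2) * Real.log (∫ ω,
          Real.exp (θ * ∑ i : Fin n, ∑ j : Fin n,
            (matrixOf ω i j - truncAt ℓ (matrixOf ω i j)) ^ 2)
          ∂(matMeasure μ n))) Filter.atTop) Filter.atTop = 0 := by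
  have h2θ : (0 : ℝ) < 2 * θ := by linarith
  set C : ℝ → ℝ := fun ℓ => Real.log (∫ x, Real.exp ((2 * θ) * (x - truncAt ℓ x) ^ 2) ∂μ)
    with hC
  set a : ℝ → ℕ → ℝ := fun ℓ n =>
    (1 / (n : ℝ) ^ 2) * Real.log (∫ ω,
      Real.exp (θ * ∑ i : Fin n, ∑ j : Fin n,
        (matrixOf ω i j - truncAt ℓ (matrixOf ω i j)) ^ 2) ∂(matMeasure μ n)) with ha
  have hCnn : ∀ ℓ : ℝ, 0 ≤ ℓ → 0 ≤ C ℓ := fun ℓ hℓ =>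
    Real.log_nonneg (one_le_integral_exp_trunc hμ h2θ hℓ)
  have h0 : ∀ ℓ : ℝ, 0 ≤ ℓ → ∀ n : ℕ, 0 ≤ a ℓ n := by
    intro ℓ hℓ n
    exact mul_nonneg (by positivity)
      (Real.log_nonneg (main_estimate μ hμ hθ hℓ n).2.1)
  have hub : ∀ ℓ : ℝ, 0 ≤ ℓ → ∀ n : ℕ, a ℓ n ≤ C ℓ := by
    intro ℓ hℓ n
    obtain ⟨hint, hE1, hE2⟩ := main_estimate μ hμ hθ hℓ n
    have hlog : Real.log (∫ ω, Real.exp (θ * ∑ i : Fin n, ∑ j : Fin n,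
        (matrixOf ω i j - truncAt ℓ (matrixOf ω i j)) ^ 2) ∂(matMeasure μ n))
        ≤ (Fintype.card (UpperTri n) : ℝ) * C ℓ := by
      have h := Real.log_le_log (by linarith) hE2
      rwa [Real.log_pow] at h
    have hcard : (Fintype.card (UpperTri n) : ℝ) ≤ (n : ℝ) ^ 2 := by
      exact_mod_cast card_upperTri_le n
    calc a ℓ n ≤ (1 / (n : ℝ) ^ 2) * ((Fintype.card (UpperTri n) : ℝ) * C ℓ) :=
          mul_le_mul_of_nonneg_left hlog (by positivity)
      _ ≤ (1 / (n : ℝ) ^ 2) * ((n : ℝ) ^ 2 * C ℓ) :=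
          mul_le_mul_of_nonneg_left
            (mul_le_mul_of_nonneg_right hcard (hCnn ℓ hℓ)) (by positivity)
      _ ≤ C ℓ := by
          rcases eq_or_ne ((n : ℝ) ^ 2) 0 with h | h
          · rw [h]; simp [hCnn ℓ hℓ]
          · rw [← mul_assoc, one_div, inv_mul_cancel₀ h, one_mul]
  have hLub : ∀ ℓ : ℝ, 0 ≤ ℓ → Filter.limsup (a ℓ) Filter.atTop ≤ C ℓ := by
    intro ℓ hℓ
    exact Filter.limsup_le_of_le
      (Filter.isCoboundedUnder_le_of_le Filter.atTop (h0 ℓ hℓ))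
      (Filter.Eventually.of_forall (hub ℓ hℓ))
  have hLlb : ∀ ℓ : ℝ, 0 ≤ ℓ → 0 ≤ Filter.limsup (a ℓ) Filter.atTop := by
    intro ℓ hℓ
    exact Filter.le_limsup_of_frequently_le
      (Filter.Frequently.of_forall (h0 ℓ hℓ))
      (Filter.isBoundedUnder_of ⟨C ℓ, hub ℓ hℓ⟩)
  have hC0 : Filter.Tendsto C Filter.atTop (𝓝 0) := by
    have h := (Real.continuousAt_log one_ne_zero).tendsto.comp
      (tendsto_integral_exp_trunc hμ h2θ)
    simpa [Function.comp_def, Real.log_one] using h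
  have hT : Filter.Tendsto (fun ℓ => Filter.limsup (a ℓ) Filter.atTop)
      Filter.atTop (𝓝 0) := by
    refine tendsto_of_tendsto_of_tendsto_of_le_of_le' tendsto_const_nhds hC0 ?_ ?_
    · filter_upwards [eventually_ge_atTop (0 : ℝ)] with ℓ hℓ using hLlb ℓ hℓ
    · filter_upwards [eventually_ge_atTop (0 : ℝ)] with ℓ hℓ using hLub ℓ hℓ
  exact hT.limsup_eq

lemma prob_bound (μ : Measure ℝ) [IsProbabilityMeasure μ]
    (hμ : ∀ θ : ℝ, 0 < θ → (∫⁻ x, ENNReal.ofReal (Real.exp (θ * x ^ 2)) ∂μ) < ⊤)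
    {θ ℓ ε : ℝ} (hθ : 0 < θ) (hℓ : 0 ≤ ℓ) (hε : 0 < ε) {n : ℕ} (hn : 1 ≤ n) :
    ((1 / (n : ℝ) ^ 2 : ℝ) : EReal) *
        ENNReal.log ((matMeasure μ n)
          {ω | ε ≤ (1 / (n : ℝ) ^ 2) * ∑ i : Fin n, ∑ j : Fin n,
            (matrixOf ω i j - truncAt ℓ (matrixOf ω i j)) ^ 2})
      ≤ ((Real.log (∫ x, Real.exp ((2 * θ) * (x - truncAt ℓ x) ^ 2) ∂μ) - θ * ε : ℝ) : EReal) := by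
  obtain ⟨hint, hE1, hE2⟩ := main_estimate μ hμ hθ hℓ n
  set C : ℝ := Real.log (∫ x, Real.exp ((2 * θ) * (x - truncAt ℓ x) ^ 2) ∂μ) with hCdef
  set S : (UpperTri n → ℝ) → ℝ := fun ω => ∑ i : Fin n, ∑ j : Fin n,
    (matrixOf ω i j - truncAt ℓ (matrixOf ω i j)) ^ 2 with hSdef
  set E : ℝ := ∫ ω, Real.exp (θ * S ω) ∂(matMeasure μ n) with hEdef
  have hn2 : (0 : ℝ) < (n : ℝ) ^ 2 := by positivity
  have hI1 : 1 ≤ ∫ x, Real.exp ((2 * θ) * (x - truncAt ℓ x) ^ 2) ∂μ :=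
    one_le_integral_exp_trunc hμ (by linarith) hℓ
  have hIpos : (0 : ℝ) < ∫ x, Real.exp ((2 * θ) * (x - truncAt ℓ x) ^ 2) ∂μ := by linarith
  -- E ≤ exp (n² C)
  have hEle : E ≤ Real.exp ((n : ℝ) ^ 2 * C) := by
    calc E ≤ (∫ x, Real.exp ((2 * θ) * (x - truncAt ℓ x) ^ 2) ∂μ) ^ (Fintype.card (UpperTri n)) :=
          hE2
      _ ≤ (∫ x, Real.exp ((2 * θ) * (x - truncAt ℓ x) ^ 2) ∂μ) ^ (n ^ 2) :=
          pow_le_pow_right₀ hI1 (card_upperTri_le n)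
      _ = Real.exp ((n : ℝ) ^ 2 * C) := by
          rw [← Real.exp_log hIpos, ← Real.exp_nat_mul]
          congr 1
          rw [hCdef]
          push_cast
          ring
  -- measurability of ofReal (exp (θ S))
  have hSm : Measurable fun ω : UpperTri n → ℝ => θ * S ω := by
    apply Measurable.const_mul
    apply Finset.measurable_sum _ (fun i _ => Finset.measurable_sum _ (fun j _ => ?_))
    exact (trunc_continuous ℓ).measurable.comp (measurable_matrixOf i j)
  have hfm : Measurable fun ω : UpperTri n → ℝ => ENNReal.ofReal (Real.exp (θ * S ω)) :=
    ENNReal.measurable_ofReal.comp (Real.measurable_exp.comp hSm)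
  -- Markov
  set b : ℝ≥0∞ := ENNReal.ofReal (Real.exp (θ * ((n : ℝ) ^ 2 * ε))) with hbdef
  have hb0 : b ≠ 0 := by
    simp [hbdef, ENNReal.ofReal_eq_zero, not_le, Real.exp_pos]
  have hbt : b ≠ ⊤ := ENNReal.ofReal_ne_top
  have hsubset : {ω | ε ≤ (1 / (n : ℝ) ^ 2) * S ω}
      ⊆ {ω | b ≤ ENNReal.ofReal (Real.exp (θ * S ω))} := by
    intro ω hω
    simp only [Set.mem_setOf_eq] at hω ⊢
    have h1 : (n : ℝ) ^ 2 * ε ≤ S ω := by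
      have := mul_le_mul_of_nonneg_left hω hn2.le
      rw [← mul_assoc, mul_one_div, div_self hn2.ne', one_mul] at this
      linarith
    exact ENNReal.ofReal_le_ofReal (Real.exp_le_exp.2 (mul_le_mul_of_nonneg_left h1 hθ.le))
  have hmarkov := mul_meas_ge_le_lintegral₀ (μ := matMeasure μ n) hfm.aemeasurable b
  have hlint : (∫⁻ ω, ENNReal.ofReal (Real.exp (θ * S ω)) ∂(matMeasure μ n))
      = ENNReal.ofReal E := by
    rw [← ofReal_integral_eq_lintegral_ofReal hint
      (Filter.Eventually.of_forall fun ω => (Real.exp_pos _).le)]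
  have hP : (matMeasure μ n) {ω | ε ≤ (1 / (n : ℝ) ^ 2) * S ω}
      ≤ ENNReal.ofReal (Real.exp ((C - θ * ε) * (n : ℝ) ^ 2)) := by
    have h1 : (matMeasure μ n) {ω | ε ≤ (1 / (n : ℝ) ^ 2) * S ω} ≤ ENNReal.ofReal E / b := by
      refine le_trans (measure_mono hsubset) ?_
      rw [ENNReal.le_div_iff_mul_le (Or.inl hb0) (Or.inl hbt), mul_comm]
      rw [← hlint]
      exact hmarkov
    refine le_trans h1 ?_
    calc ENNReal.ofReal E / b ≤ ENNReal.ofReal (Real.exp ((n : ℝ) ^ 2 * C)) / b :=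
          ENNReal.div_le_div_right (ENNReal.ofReal_le_ofReal hEle) b
      _ = ENNReal.ofReal (Real.exp ((n : ℝ) ^ 2 * C) / Real.exp (θ * ((n : ℝ) ^ 2 * ε))) := by
          rw [ENNReal.ofReal_div_of_pos (Real.exp_pos _)]
      _ = ENNReal.ofReal (Real.exp ((C - θ * ε) * (n : ℝ) ^ 2)) := by
          rw [← Real.exp_sub]
          congr 1
          ring
  have hlog : ENNReal.log ((matMeasure μ n) {ω | ε ≤ (1 / (n : ℝ) ^ 2) * S ω})
      ≤ (((C - θ * ε) * (n : ℝ) ^ 2 : ℝ) : EReal) := by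
    refine le_trans (ENNReal.log_monotone hP) ?_
    rw [ENNReal.log_ofReal_of_pos (Real.exp_pos _), Real.log_exp]
  calc ((1 / (n : ℝ) ^ 2 : ℝ) : EReal) *
        ENNReal.log ((matMeasure μ n) {ω | ε ≤ (1 / (n : ℝ) ^ 2) * S ω})
      ≤ ((1 / (n : ℝ) ^ 2 : ℝ) : EReal) * (((C - θ * ε) * (n : ℝ) ^ 2 : ℝ) : EReal) :=
        mul_le_mul_of_nonneg_left hlog (EReal.coe_nonneg.2 (by positivity))
    _ = ((C - θ * ε : ℝ) : EReal) := by
        rw [← EReal.coe_mul]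
        congr 1
        field_simp

lemma part_two (μ : Measure ℝ) [IsProbabilityMeasure μ]
    (hμ : ∀ θ : ℝ, 0 < θ → (∫⁻ x, ENNReal.ofReal (Real.exp (θ * x ^ 2)) ∂μ) < ⊤)
    {ε : ℝ} (hε : 0 < ε) :
    Filter.limsup (fun ℓ : ℝ =>
      Filter.limsup (fun n : ℕ =>
        ((1 / (n : ℝ) ^ 2 : ℝ) : EReal) *
          ENNReal.log ((matMeasure μ n)
            {ω | ε ≤ (1 / (n : ℝ) ^ 2) * ∑ i : Fin n, ∑ j : Fin n,
              (matrixOf ω i j - truncAt ℓ (matrixOf ω i j)) ^ 2}))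
        Filter.atTop) Filter.atTop = ⊥ := by
  rw [EReal.eq_bot_iff_forall_lt]
  intro y
  set θ : ℝ := (1 + |y|) / ε with hθdef
  have hθ : 0 < θ := div_pos (by positivity) hε
  have h2θ : (0 : ℝ) < 2 * θ := by linarith
  set C : ℝ → ℝ := fun ℓ => Real.log (∫ x, Real.exp ((2 * θ) * (x - truncAt ℓ x) ^ 2) ∂μ)
    with hCdef
  have hTn : ∀ ℓ : ℝ, 0 ≤ ℓ →
      Filter.limsup (fun n : ℕ =>
        ((1 / (n : ℝ) ^ 2 : ℝ) : EReal) *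
          ENNReal.log ((matMeasure μ n)
            {ω | ε ≤ (1 / (n : ℝ) ^ 2) * ∑ i : Fin n, ∑ j : Fin n,
              (matrixOf ω i j - truncAt ℓ (matrixOf ω i j)) ^ 2}))
        Filter.atTop ≤ ((C ℓ - θ * ε : ℝ) : EReal) := by
    intro ℓ hℓ
    refine Filter.limsup_le_of_le (by isBoundedDefault) ?_
    filter_upwards [eventually_ge_atTop 1] with n hn
    exact prob_bound μ hμ hθ hℓ hε hn
  have hC0 : Filter.Tendsto C Filter.atTop (𝓝 0) := by
    have h := (Real.continuousAt_log one_ne_zero).tendsto.comp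
      (tendsto_integral_exp_trunc hμ h2θ)
    simpa [Function.comp_def, Real.log_one] using h
  have hC1 : Filter.Tendsto (fun ℓ => ((C ℓ - θ * ε : ℝ) : EReal)) Filter.atTop
      (𝓝 ((-(θ * ε) : ℝ) : EReal)) := by
    have h1 : Filter.Tendsto (fun ℓ => C ℓ - θ * ε) Filter.atTop (𝓝 (0 - θ * ε)) :=
      hC0.sub_const _
    rw [zero_sub] at h1
    exact (continuous_coe_real_ereal.tendsto _).comp h1
  have hmain : Filter.limsup (fun ℓ : ℝ =>
      Filter.limsup (fun n : ℕ =>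
        ((1 / (n : ℝ) ^ 2 : ℝ) : EReal) *
          ENNReal.log ((matMeasure μ n)
            {ω | ε ≤ (1 / (n : ℝ) ^ 2) * ∑ i : Fin n, ∑ j : Fin n,
              (matrixOf ω i j - truncAt ℓ (matrixOf ω i j)) ^ 2}))
        Filter.atTop) Filter.atTop ≤ ((-(θ * ε) : ℝ) : EReal) := by
    rw [← hC1.limsup_eq]
    refine Filter.limsup_le_limsup ?_ (by isBoundedDefault) (by isBoundedDefault)
    filter_upwards [eventually_ge_atTop (0 : ℝ)] with ℓ hℓ using hTn ℓ hℓ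
  refine lt_of_le_of_lt hmain ?_
  have : -(θ * ε) < y := by
    have hθε : θ * ε = 1 + |y| := by
      rw [hθdef]
      field_simp
    rw [hθε]
    have := neg_abs_le y
    linarith
  exact_mod_cast this


/-- **Section 5 (truncation estimates)**: (i) for every `θ > 0`,
`limsup_{ℓ→∞} limsup_{n→∞} (1/n²) log 𝔼 exp[θ Σ_{i,j}(x_{i,j} − f_ℓ(x_{i,j}))²] = 0`,
and (ii) consequently, for every `ε > 0`, the probability that
`(1/n²) Σ_{i,j}(x_{i,j} − f_ℓ(x_{i,j}))² ≥ ε` is superexponentially small at scale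
`n²`, uniformly as `ℓ → ∞`. -/
theorem truncation_superexponential_estimate (μ : Measure ℝ) [IsProbabilityMeasure μ]
    (hμ : ∀ θ : ℝ, 0 < θ → (∫⁻ x, ENNReal.ofReal (Real.exp (θ * x ^ 2)) ∂μ) < ⊤) :
    (∀ θ : ℝ, 0 < θ →
      Filter.limsup (fun ℓ : ℝ =>
        Filter.limsup (fun n : ℕ =>
          (1 / (n : ℝ) ^ 2) * Real.log (∫ ω,
            Real.exp (θ * ∑ i : Fin n, ∑ j : Fin n,
              (matrixOf ω i j - truncAt ℓ (matrixOf ω i j)) ^ 2)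
            ∂(matMeasure μ n))) Filter.atTop) Filter.atTop = 0) ∧
    (∀ ε : ℝ, 0 < ε →
      Filter.limsup (fun ℓ : ℝ =>
        Filter.limsup (fun n : ℕ =>
          ((1 / (n : ℝ) ^ 2 : ℝ) : EReal) *
            ENNReal.log ((matMeasure μ n)
              {ω | ε ≤ (1 / (n : ℝ) ^ 2) * ∑ i : Fin n, ∑ j : Fin n,
                (matrixOf ω i j - truncAt ℓ (matrixOf ω i j)) ^ 2}))
          Filter.atTop) Filter.atTop = ⊥) := by
  constructor
  · intro θ hθ
    exact part_one μ hμ hθ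
  · intro ε hε
    exact part_two μ hμ hε

end
end
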